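/- Conflict-equivalent schedules are view equivalent (hence every conflict-serializable schedule is view serializable): say that S' is obtained from S by one non-conflicting adjacent swap if there exist schedules A, B and non-conflicting operations p, q with S = A ++ p :: q :: B and S' = A ++ q :: p :: B; say S and S' are conflict equivalent if they are related by the reflexive-transitive closure of this one-swap relation. Then whenever S and S' are conflict equivalent, S and S' are view equivalent, viewEquiv S S'. In particular, if a schedule is conflict equivalent to a serial schedule, it is view equivalent to that serial schedule. -/
import Mathlib


/-- Run a schedule (list of data operations) on a storage state, returning the final state. -/
def run {σ V : Type*} : List (σ → σ × V) → σ → σ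
  | [], s => s
  | o :: P, s => run P ((o s).1)

/-- The return-value trace of a schedule started in a given state. -/
def trace {σ V : Type*} : List (σ → σ × V) → σ → List V
  | [], _ => []
  | o :: P, s => (o s).2 :: trace P ((o s).1)

/-- View equivalence of schedules: in any context, all future operations return identical values. -/
def viewEquiv {σ V : Type*} (S S' : List (σ → σ × V)) : Prop :=
  ∀ (A P : List (σ → σ × V)) (s : σ),
    trace P (run (A ++ S) s) = trace P (run (A ++ S') s)

/-- Two operations are non-conflicting if both execution orders agree on final state
and on both operations' return values, from every state. -/
def nonConflicting {σ V : Type*} (p q : σ → σ × V) : Prop :=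
  ∀ s : σ,
    (q ((p s).1)).1 = (p ((q s).1)).1 ∧
    (p s).2 = (p ((q s).1)).2 ∧
    (q s).2 = (q ((p s).1)).2

/-- Two operations are commutative if swapping them in any context preserves view equivalence. -/
def commutative {σ V : Type*} (o o' : σ → σ × V) : Prop :=
  ∀ (α β : List (σ → σ × V)), viewEquiv (α ++ [o, o'] ++ β) (α ++ [o', o] ++ β)

/-- `oinv` is an inverse operation of `o`. -/
def inverseOp {σ V : Type*} (o oinv : σ → σ × V) : Prop :=
  ∀ (α β : List (σ → σ × V)), viewEquiv (α ++ β) (α ++ [o, oinv] ++ β)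

/-- One adjacent swap of non-conflicting operations. -/
def swapNC {σ V : Type*} (S S' : List (σ → σ × V)) : Prop :=
  ∃ (A B : List (σ → σ × V)) (p q : σ → σ × V),
    nonConflicting p q ∧ S = A ++ p :: q :: B ∧ S' = A ++ q :: p :: B

theorem run_append {σ V : Type*} (L M : List (σ → σ × V)) (s : σ) :
    run (L ++ M) s = run M (run L s) := by
  induction L generalizing s with
  | nil => rfl
  | cons o L ih => simp [run, ih]

/-- Conflict-equivalent schedules (related by a chain of non-conflicting adjacent swaps)
are view equivalent; hence conflict-serializable schedules are view serializable. -/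
theorem conflictEquiv_viewEquiv {σ V : Type*} (S S' : List (σ → σ × V))
    (h : Relation.ReflTransGen swapNC S S') : viewEquiv S S' := by
  induction h with
  | refl => intro A P s; rfl
  | tail _ hstep ih =>
    rename_i b c _
    intro A P s
    rw [ih A P s]
    obtain ⟨A', B, p, q, hnc, hb, hc⟩ := hstep
    subst hb hc
    have hrun : run (A ++ (A' ++ p :: q :: B)) s = run (A ++ (A' ++ q :: p :: B)) s := by
      rw [run_append, run_append, run_append, run_append]
      show run B _ = run B _
      rw [(hnc _).1]
    rw [hrun]
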